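/- A theory T is sound (every T-provable sentence is true in the standard model ℕ) if and only if every Gödelian sentence of T is true in ℕ. -/

import Mathlib

/-- An abstract propositional-logical syntax for sentences of arithmetic. -/
structure PropLang where
  Sent : Type
  falsum : Sent
  neg : Sent → Sent
  imp : Sent → Sent → Sent
  conj : Sent → Sent → Sent
  disj : Sent → Sent → Sent
  iffS : Sent → Sent → Sent

namespace PropLang

/-- A valuation (e.g. truth in the standard model ℕ) commuting with the connectives. -/
def IsValuation (L : PropLang) (v : L.Sent → Prop) : Prop :=
  (¬ v L.falsum) ∧
  (∀ a, v (L.neg a) ↔ ¬ v a) ∧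
  (∀ a b, v (L.imp a b) ↔ (v a → v b)) ∧
  (∀ a b, v (L.conj a b) ↔ (v a ∧ v b)) ∧
  (∀ a b, v (L.disj a b) ↔ (v a ∨ v b)) ∧
  (∀ a b, v (L.iffS a b) ↔ (v a ↔ v b))

/-- Propositional tautologies: sentences true under every valuation. -/
def Taut (L : PropLang) (s : L.Sent) : Prop :=
  ∀ v : L.Sent → Prop, L.IsValuation v → v s

end PropLang

/-- A (recursively axiomatized) theory together with its provability
predicate `Pr`; `Pr σ` denotes the sentence `Pr_T(#σ)`. -/
structure TheoryOn (L : PropLang) where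
  Prv : L.Sent → Prop
  Pr : L.Sent → L.Sent

namespace TheoryOn

variable {L : PropLang}

/-- `T` is closed under classical propositional logic. -/
def ClosedUnderLogic (T : TheoryOn L) : Prop :=
  (∀ s, L.Taut s → T.Prv s) ∧
  (∀ a b, T.Prv (L.imp a b) → T.Prv a → T.Prv b)

/-- Consistency of `T`. -/
def Consistent (T : TheoryOn L) : Prop :=
  ¬ ∃ s, T.Prv s ∧ T.Prv (L.neg s)

/-- Soundness of `T` with respect to truth in the standard model. -/
def Sound (T : TheoryOn L) (TrN : L.Sent → Prop) : Prop :=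
  ∀ s, T.Prv s → TrN s

/-- `γ` is a Gödelian sentence of `T`: `T ⊢ γ ↔ ¬Pr_T(#γ)`. -/
def Godelian (T : TheoryOn L) (γ : L.Sent) : Prop :=
  T.Prv (L.iffS γ (L.neg (T.Pr γ)))

/-- The Hilbert–Bernays–Löb derivability conditions for `Pr_T`. -/
def HBL (T : TheoryOn L) : Prop :=
  (∀ s, T.Prv s → T.Prv (T.Pr s)) ∧
  (∀ a b, T.Prv (L.imp (T.Pr (L.imp a b)) (L.imp (T.Pr a) (T.Pr b)))) ∧
  (∀ s, T.Prv (L.imp (T.Pr s) (T.Pr (T.Pr s))))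

/-- `Pr_T` is a standard provability predicate:
`ℕ ⊨ Pr_T(#σ)` iff `T ⊢ σ`. -/
def PrStandard (T : TheoryOn L) (TrN : L.Sent → Prop) : Prop :=
  ∀ s, TrN (T.Pr s) ↔ T.Prv s

end TheoryOn

/-- `T` is sound iff every Gödelian sentence of `T` is true in ℕ. -/
theorem sound_iff_all_godelian_true (L : PropLang) (TrN : L.Sent → Prop)
    (hTrN : L.IsValuation TrN) (T : TheoryOn L)
    (hLog : T.ClosedUnderLogic) (hHBL : T.HBL)
    (hCons : T.Consistent)
    (hStd : T.PrStandard TrN)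
    (hDiag : ∃ γ, T.Godelian γ) :
    T.Sound TrN ↔ ∀ γ, T.Godelian γ → TrN γ := by
  obtain ⟨hf, hn, hi, hc, hd, hif⟩ := hTrN
  obtain ⟨htaut, hmp⟩ := hLog
  obtain ⟨hd1, hd2, _⟩ := hHBL
  constructor
  · intro hS γ hγ
    have h1 : TrN (L.iffS γ (L.neg (T.Pr γ))) := hS _ hγ
    rw [hif, hn, hStd] at h1
    by_contra h
    exact h (hS γ (by tauto))
  · intro hG s hs
    obtain ⟨γ, hγ⟩ := hDiag
    -- show conj γ s is Gödelian
    set C := L.conj γ s with hC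
    set P := T.Pr γ with hP
    set Q := T.Pr C with hQ
    have h2 : T.Prv (L.imp γ C) := by
      refine hmp _ _ (htaut _ ?_) hs
      intro v hv
      obtain ⟨_, _, hi', hc', _, _⟩ := hv
      simp only [hi', hc', hC]
      tauto
    have h3 : T.Prv (L.imp C γ) := htaut _ (by
      intro v hv
      obtain ⟨_, _, hi', hc', _, _⟩ := hv
      simp only [hi', hc', hC]
      tauto)
    have h4 : T.Prv (L.imp P Q) := hmp _ _ (hd2 _ _) (hd1 _ h2)
    have h5 : T.Prv (L.imp Q P) := hmp _ _ (hd2 _ _) (hd1 _ h3)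
    have htt : L.Taut (L.imp (L.iffS γ (L.neg P)) (L.imp (L.imp γ C)
        (L.imp (L.imp C γ) (L.imp (L.imp P Q) (L.imp (L.imp Q P)
        (L.iffS C (L.neg Q))))))) := by
      intro v hv
      obtain ⟨_, hn', hi', _, _, hif'⟩ := hv
      simp only [hi', hif', hn']
      tauto
    have hCG : T.Godelian C :=
      hmp _ _ (hmp _ _ (hmp _ _ (hmp _ _ (hmp _ _ (htaut _ htt) hγ) h2) h3) h4) h5
    have := hG C hCG
    rw [hC, hc] at this
    exact this.2
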